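/- Let Λ be a finite dimensional algebra and T a tilting Λ-module. For any simple left Λ-module S, exactly one of T ⊗_Λ S = 0 and Tor₁^Λ(T, S) = 0 holds. -/

import Mathlib

/- STATEMENT 3: Let `Λ` be a finite dimensional algebra and `T` a tilting (right)
`Λ`-module.  For any simple left `Λ`-module `S`, exactly one of `T ⊗_Λ S = 0` and
`Tor₁^Λ(T, S) = 0` holds.
Right `Λ`-modules are `Λᵐᵒᵖ`-modules.  The balanced tensor product `T ⊗_Λ S` is
constructed by hand (`BalTensor`), `T ⊗_Λ S = 0` is `Subsingleton (BalTensor Λ T S)`,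
and `Tor₁^Λ(T,S) = 0` says that for every projective presentation
`0 → Q₁ → Q₀ → T → 0` of right modules, the induced map `Q₁ ⊗_Λ S → Q₀ ⊗_Λ S` is
injective. -/

open CategoryTheory

section BalancedTensor

variable (R : Type) [Ring R]

def tensorRels (M : Type) [AddCommGroup M] [Module Rᵐᵒᵖ M]
    (N : Type) [AddCommGroup N] [Module R N] : AddSubgroup (FreeAbelianGroup (M × N)) :=
  AddSubgroup.closure
    ({z | ∃ (m m' : M) (y : N), z = FreeAbelianGroup.of (m + m', y) -
        FreeAbelianGroup.of (m, y) - FreeAbelianGroup.of (m', y)} ∪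
     {z | ∃ (m : M) (y y' : N), z = FreeAbelianGroup.of (m, y + y') -
        FreeAbelianGroup.of (m, y) - FreeAbelianGroup.of (m, y')} ∪
     {z | ∃ (m : M) (r : R) (y : N), z = FreeAbelianGroup.of (MulOpposite.op r • m, y) -
        FreeAbelianGroup.of (m, r • y)})

def BalTensor (M : Type) [AddCommGroup M] [Module Rᵐᵒᵖ M]
    (N : Type) [AddCommGroup N] [Module R N] : Type :=
  FreeAbelianGroup (M × N) ⧸ tensorRels R M N

instance (M : Type) [AddCommGroup M] [Module Rᵐᵒᵖ M]
    (N : Type) [AddCommGroup N] [Module R N] : AddCommGroup (BalTensor R M N) :=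
  QuotientAddGroup.Quotient.addCommGroup _

def tmk (M : Type) [AddCommGroup M] [Module Rᵐᵒᵖ M]
    (N : Type) [AddCommGroup N] [Module R N] (m : M) (y : N) : BalTensor R M N :=
  QuotientAddGroup.mk (FreeAbelianGroup.of (m, y))

def tmap (M M' : Type) [AddCommGroup M] [Module Rᵐᵒᵖ M] [AddCommGroup M'] [Module Rᵐᵒᵖ M']
    (N : Type) [AddCommGroup N] [Module R N] (f : M →ₗ[Rᵐᵒᵖ] M') :
    BalTensor R M N →+ BalTensor R M' N := by
  refine QuotientAddGroup.lift _
    ((QuotientAddGroup.mk' (tensorRels R M' N)).comp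
      (FreeAbelianGroup.lift (fun p : M × N => FreeAbelianGroup.of (f p.1, p.2)))) ?_
  have h : tensorRels R M N ≤
      ((QuotientAddGroup.mk' (tensorRels R M' N)).comp
        (FreeAbelianGroup.lift (fun p : M × N => FreeAbelianGroup.of (f p.1, p.2)))).ker := by
    rw [tensorRels, AddSubgroup.closure_le]
    rintro z hz
    obtain (⟨m, m', y, rfl⟩ | ⟨m, y, y', rfl⟩) | ⟨m, r, y, rfl⟩ := hz
    · simp only [SetLike.mem_coe, AddMonoidHom.mem_ker, AddMonoidHom.comp_apply, map_sub,
        FreeAbelianGroup.lift_apply_of, QuotientAddGroup.mk'_apply, ← QuotientAddGroup.mk_sub,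
        QuotientAddGroup.eq_zero_iff]
      exact AddSubgroup.subset_closure (Or.inl (Or.inl ⟨f m, f m', y, by rw [map_add]⟩))
    · simp only [SetLike.mem_coe, AddMonoidHom.mem_ker, AddMonoidHom.comp_apply, map_sub,
        FreeAbelianGroup.lift_apply_of, QuotientAddGroup.mk'_apply, ← QuotientAddGroup.mk_sub,
        QuotientAddGroup.eq_zero_iff]
      exact AddSubgroup.subset_closure (Or.inl (Or.inr ⟨f m, y, y', rfl⟩))
    · simp only [SetLike.mem_coe, AddMonoidHom.mem_ker, AddMonoidHom.comp_apply, map_sub,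
        FreeAbelianGroup.lift_apply_of, QuotientAddGroup.mk'_apply, ← QuotientAddGroup.mk_sub,
        QuotientAddGroup.eq_zero_iff, map_smul]
      exact AddSubgroup.subset_closure (Or.inr ⟨f m, r, y, rfl⟩)
  intro x hx
  exact h hx


end BalancedTensor

def InAdd (R : Type) [Ring R] (M : Type) [AddCommGroup M] [Module R M]
    (X : Type) [AddCommGroup X] [Module R X] : Prop :=
  ∃ (m : ℕ) (Y : ModuleCat.{0} R), Nonempty ((X × Y) ≃ₗ[R] (Fin m → M))

structure IsTilting (R : Type) [Ring R] (T : Type) [AddCommGroup T] [Module R T] : Prop where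
  finite : Module.Finite R T
  pd_le_one : ∃ (Q0 Q1 : ModuleCat.{0} R) (i : Q1 →ₗ[R] Q0) (p : Q0 →ₗ[R] T),
    Module.Projective R Q0 ∧ Module.Projective R Q1 ∧
    Function.Injective i ∧ Function.Surjective p ∧ Function.Exact i p
  ext_self_vanish : ∀ (Q0 Q1 : ModuleCat.{0} R) (i : Q1 →ₗ[R] Q0) (p : Q0 →ₗ[R] T),
    Module.Projective R Q0 → Module.Projective R Q1 →
    Function.Injective i → Function.Surjective p → Function.Exact i p →
    ∀ φ : Q1 →ₗ[R] T, ∃ ψ : Q0 →ₗ[R] T, ψ.comp i = φ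
  coresolution : ∃ (T0 T1 : ModuleCat.{0} R) (a : R →ₗ[R] T0) (b : T0 →ₗ[R] T1),
    InAdd R T T0 ∧ InAdd R T T1 ∧
    Function.Injective a ∧ Function.Surjective b ∧ Function.Exact a b

/-- `Tor₁^Λ(T, S) = 0`: for every projective presentation `0 → Q₁ → Q₀ → T → 0` of the
right module `T`, the induced map `Q₁ ⊗_Λ S → Q₀ ⊗_Λ S` is injective. -/
def Tor1Vanishes (Λ : Type) [Ring Λ] (T : Type) [AddCommGroup T] [Module Λᵐᵒᵖ T]
    (S : Type) [AddCommGroup S] [Module Λ S] : Prop :=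
  ∀ (Q0 Q1 : ModuleCat.{0} Λᵐᵒᵖ) (i : Q1 →ₗ[Λᵐᵒᵖ] Q0) (p : Q0 →ₗ[Λᵐᵒᵖ] T),
    Module.Projective Λᵐᵒᵖ Q0 → Module.Projective Λᵐᵒᵖ Q1 →
    Function.Injective i → Function.Surjective p → Function.Exact i p →
    Function.Injective (tmap Λ Q1 Q0 S i)
open MulOpposite

section NNsec

variable (Λ : Type) [Ring Λ] {S : Type} [AddCommGroup S] [Module Λ S] (s₀ : S)

/-- The additive subgroup `M·ann(s₀)` of a right module `M`. -/
def NN (M : Type) [AddCommGroup M] [Module Λᵐᵒᵖ M] : AddSubgroup M :=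
  AddSubgroup.closure {z : M | ∃ r : Λ, r • s₀ = 0 ∧ ∃ x : M, z = op r • x}

variable {M M' : Type} [AddCommGroup M] [Module Λᵐᵒᵖ M] [AddCommGroup M'] [Module Λᵐᵒᵖ M']

lemma mem_NN_gen {r : Λ} (hr : r • s₀ = 0) (x : M) : op r • x ∈ NN Λ s₀ M :=
  AddSubgroup.subset_closure ⟨r, hr, x, rfl⟩

lemma NN_map (f : M →ₗ[Λᵐᵒᵖ] M') {x : M} (hx : x ∈ NN Λ s₀ M) : f x ∈ NN Λ s₀ M' := by
  induction hx using AddSubgroup.closure_induction with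
  | mem z hz => obtain ⟨r, hr, x, rfl⟩ := hz; rw [map_smul]; exact mem_NN_gen Λ s₀ hr _
  | zero => simpa using (NN Λ s₀ M').zero_mem
  | add a b _ _ ha hb => rw [map_add]; exact (NN Λ s₀ M').add_mem ha hb
  | neg a _ ha => rw [map_neg]; exact (NN Λ s₀ M').neg_mem ha

lemma NN_top_of_surj (f : M →ₗ[Λᵐᵒᵖ] M') (hf : Function.Surjective f)
    (h : NN Λ s₀ M = ⊤) : NN Λ s₀ M' = ⊤ := by
  rw [eq_top_iff]; intro y _
  obtain ⟨x, rfl⟩ := hf y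
  exact NN_map Λ s₀ f (h ▸ AddSubgroup.mem_top x)

lemma NN_pi_iff {k : ℕ} {Q : Type} [AddCommGroup Q] [Module Λᵐᵒᵖ Q] (v : Fin k → Q) :
    v ∈ NN Λ s₀ (Fin k → Q) ↔ ∀ j, v j ∈ NN Λ s₀ Q := by
  constructor
  · intro hv j
    exact NN_map Λ s₀ (LinearMap.proj (R := Λᵐᵒᵖ) (φ := fun _ : Fin k => Q) j) hv
  · intro hv
    have : v = ∑ j : Fin k, Pi.single j (v j) := (Finset.univ_sum_single v).symm
    rw [this]
    exact AddSubgroup.sum_mem _ fun j _ =>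
      NN_map Λ s₀ (LinearMap.single Λᵐᵒᵖ (fun _ : Fin k => Q) j) (hv j)

/-! ### Relations in `BalTensor` -/

lemma tmk_rel1 (x x' : M) (y : S) :
    tmk Λ M S (x + x') y = tmk Λ M S x y + tmk Λ M S x' y := by
  have h : (QuotientAddGroup.mk (FreeAbelianGroup.of (x + x', y) -
      FreeAbelianGroup.of (x, y) - FreeAbelianGroup.of (x', y)) : BalTensor Λ M S) = 0 :=
    (QuotientAddGroup.eq_zero_iff _).2
      (AddSubgroup.subset_closure (Or.inl (Or.inl ⟨x, x', y, rfl⟩)))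
  rw [sub_sub, QuotientAddGroup.mk_sub, sub_eq_zero, QuotientAddGroup.mk_add] at h
  exact h

lemma tmk_rel2 (x : M) (y y' : S) :
    tmk Λ M S x (y + y') = tmk Λ M S x y + tmk Λ M S x y' := by
  have h : (QuotientAddGroup.mk (FreeAbelianGroup.of (x, y + y') -
      FreeAbelianGroup.of (x, y) - FreeAbelianGroup.of (x, y')) : BalTensor Λ M S) = 0 :=
    (QuotientAddGroup.eq_zero_iff _).2
      (AddSubgroup.subset_closure (Or.inl (Or.inr ⟨x, y, y', rfl⟩)))
  rw [sub_sub, QuotientAddGroup.mk_sub, sub_eq_zero, QuotientAddGroup.mk_add] at h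
  exact h

lemma tmk_rel3 (r : Λ) (x : M) (y : S) :
    tmk Λ M S (op r • x) y = tmk Λ M S x (r • y) := by
  have h : (QuotientAddGroup.mk (FreeAbelianGroup.of (op r • x, y) -
      FreeAbelianGroup.of (x, r • y)) : BalTensor Λ M S) = 0 :=
    (QuotientAddGroup.eq_zero_iff _).2
      (AddSubgroup.subset_closure (Or.inr ⟨x, r, y, rfl⟩))
  rw [QuotientAddGroup.mk_sub, sub_eq_zero] at h
  exact h

lemma tmk_zero_left (y : S) : tmk Λ M S (0 : M) y = 0 := by
  have := tmk_rel1 Λ (0 : M) 0 y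
  rw [add_zero] at this
  exact (left_eq_add.mp this)

lemma tmk_neg_left (x : M) (y : S) : tmk Λ M S (-x) y = - tmk Λ M S x y := by
  have := tmk_rel1 Λ x (-x) y
  rw [add_neg_cancel, tmk_zero_left] at this
  exact (neg_eq_of_add_eq_zero_right this.symm).symm

lemma tmk_zero_right (x : M) : tmk Λ M S x (0 : S) = 0 := by
  have := tmk_rel2 Λ x (0 : S) 0
  rw [add_zero] at this
  exact (left_eq_add.mp this)

lemma tmk_of_mem_NN {x : M} (hx : x ∈ NN Λ s₀ M) : tmk Λ M S x s₀ = 0 := by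
  induction hx using AddSubgroup.closure_induction with
  | mem z hz =>
    obtain ⟨r, hr, u, rfl⟩ := hz
    rw [tmk_rel3, hr, tmk_zero_right]
  | zero => exact tmk_zero_left Λ s₀
  | add a b _ _ ha hb => rw [tmk_rel1, ha, hb, add_zero]
  | neg a _ ha => rw [tmk_neg_left, ha, neg_zero]

end NNsec
section PhiSec

variable (Λ : Type) [Ring Λ] {S : Type} [AddCommGroup S] [Module Λ S] {s₀ : S}

noncomputable def rho (hgen : ∀ y : S, ∃ r : Λ, r • s₀ = y) (y : S) : Λ := (hgen y).choose

lemma rho_spec (hgen : ∀ y : S, ∃ r : Λ, r • s₀ = y) (y : S) : rho Λ hgen y • s₀ = y := (hgen y).choose_spec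

variable {M : Type} [AddCommGroup M] [Module Λᵐᵒᵖ M]

noncomputable def phi (hgen : ∀ y : S, ∃ r : Λ, r • s₀ = y) : BalTensor Λ M S →+ M ⧸ NN Λ s₀ M := by
  refine QuotientAddGroup.lift _
    ((QuotientAddGroup.mk' (NN Λ s₀ M)).comp
      (FreeAbelianGroup.lift (fun p : M × S => op (rho Λ hgen p.2) • p.1))) ?_
  have h : tensorRels Λ M S ≤
      ((QuotientAddGroup.mk' (NN Λ s₀ M)).comp
        (FreeAbelianGroup.lift (fun p : M × S => op (rho Λ hgen p.2) • p.1))).ker := by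
    rw [tensorRels, AddSubgroup.closure_le]
    rintro z hz
    obtain (⟨m, m', y, rfl⟩ | ⟨m, y, y', rfl⟩) | ⟨m, r, y, rfl⟩ := hz
    · simp only [SetLike.mem_coe, AddMonoidHom.mem_ker, AddMonoidHom.comp_apply, map_sub,
        FreeAbelianGroup.lift_apply_of, QuotientAddGroup.mk'_apply, ← QuotientAddGroup.mk_sub,
        QuotientAddGroup.eq_zero_iff]
      rw [smul_add, add_sub_cancel_left, sub_self]
      exact (NN Λ s₀ M).zero_mem
    · simp only [SetLike.mem_coe, AddMonoidHom.mem_ker, AddMonoidHom.comp_apply, map_sub,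
        FreeAbelianGroup.lift_apply_of, QuotientAddGroup.mk'_apply, ← QuotientAddGroup.mk_sub,
        QuotientAddGroup.eq_zero_iff]
      have : op (rho Λ hgen (y + y')) • m - op (rho Λ hgen y) • m - op (rho Λ hgen y') • m
          = op (rho Λ hgen (y + y') - rho Λ hgen y - rho Λ hgen y') • m := by
        simp [MulOpposite.op_sub, sub_smul]
      rw [this]
      refine mem_NN_gen Λ s₀ ?_ m
      simp [sub_smul, rho_spec Λ hgen]
    · simp only [SetLike.mem_coe, AddMonoidHom.mem_ker, AddMonoidHom.comp_apply, map_sub,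
        FreeAbelianGroup.lift_apply_of, QuotientAddGroup.mk'_apply, ← QuotientAddGroup.mk_sub,
        QuotientAddGroup.eq_zero_iff]
      have : op (rho Λ hgen y) • (op r • m) - op (rho Λ hgen (r • y)) • m
          = op (r * rho Λ hgen y - rho Λ hgen (r • y)) • m := by
        rw [smul_smul, ← op_mul, MulOpposite.op_sub, sub_smul]
      rw [this]
      refine mem_NN_gen Λ s₀ ?_ m
      rw [sub_smul, mul_smul, rho_spec Λ hgen, rho_spec Λ hgen, sub_self]
  intro x hx
  exact h hx

lemma phi_tmk (hgen : ∀ y : S, ∃ r : Λ, r • s₀ = y) (x : M) (y : S) :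
    phi Λ hgen (tmk Λ M S x y) = QuotientAddGroup.mk (op (rho Λ hgen y) • x) := by
  show QuotientAddGroup.lift _ _ _ (QuotientAddGroup.mk _) = _
  rw [QuotientAddGroup.lift_mk, AddMonoidHom.comp_apply, FreeAbelianGroup.lift_apply_of,
    QuotientAddGroup.mk'_apply]

lemma tmk_s0_eq_zero_iff (hgen : ∀ y : S, ∃ r : Λ, r • s₀ = y) (x : M) : tmk Λ M S x s₀ = 0 ↔ x ∈ NN Λ s₀ M := by
  constructor
  · intro h
    have h2 := congrArg (phi Λ hgen) h
    rw [phi_tmk, map_zero, QuotientAddGroup.eq_zero_iff] at h2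
    have h3 : op (rho Λ hgen s₀ - 1) • x ∈ NN Λ s₀ M := by
      refine mem_NN_gen Λ s₀ ?_ x
      rw [sub_smul, rho_spec Λ hgen, one_smul, sub_self]
    have : x = op (rho Λ hgen s₀) • x - op (rho Λ hgen s₀ - 1) • x := by
      rw [MulOpposite.op_sub, sub_smul, op_one, one_smul, sub_sub_cancel]
    rw [this]
    exact AddSubgroup.sub_mem _ h2 h3
  · exact tmk_of_mem_NN Λ s₀

lemma tmk_s0_surj (hgen : ∀ y : S, ∃ r : Λ, r • s₀ = y) (t : BalTensor Λ M S) : ∃ x : M, t = tmk Λ M S x s₀ := by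
  induction t using QuotientAddGroup.induction_on with
  | H z =>
  induction z using FreeAbelianGroup.induction_on with
  | zero => exact ⟨0, (tmk_zero_left Λ s₀).symm⟩
  | of p =>
    refine ⟨op (rho Λ hgen p.2) • p.1, ?_⟩
    show tmk Λ M S p.1 p.2 = _
    rw [tmk_rel3, rho_spec Λ hgen]
  | neg p h =>
    obtain ⟨u, hu⟩ := h
    refine ⟨-u, ?_⟩
    rw [tmk_neg_left, ← hu]
    rfl
  | add z z' h h' =>
    obtain ⟨u, hu⟩ := h
    obtain ⟨u', hu'⟩ := h'
    refine ⟨u + u', ?_⟩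
    rw [tmk_rel1, ← hu, ← hu']
    rfl

lemma subsingleton_iff_NN_top (hgen : ∀ y : S, ∃ r : Λ, r • s₀ = y) :
    Subsingleton (BalTensor Λ M S) ↔ NN Λ s₀ M = ⊤ := by
  constructor
  · intro h
    rw [eq_top_iff]
    intro x _
    rw [← tmk_s0_eq_zero_iff Λ hgen]
    exact Subsingleton.elim _ _
  · intro h
    refine ⟨fun t t' => ?_⟩
    obtain ⟨x, rfl⟩ := tmk_s0_surj Λ hgen t
    obtain ⟨x', rfl⟩ := tmk_s0_surj Λ hgen t'
    rw [tmk_of_mem_NN Λ s₀ (h ▸ AddSubgroup.mem_top x),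
      tmk_of_mem_NN Λ s₀ (h ▸ AddSubgroup.mem_top x')]

variable {M' : Type} [AddCommGroup M'] [Module Λᵐᵒᵖ M']

lemma tmap_tmk (f : M →ₗ[Λᵐᵒᵖ] M') (x : M) (y : S) :
    tmap Λ M M' S f (tmk Λ M S x y) = tmk Λ M' S (f x) y := rfl

lemma injective_tmap_iff (hgen : ∀ y : S, ∃ r : Λ, r • s₀ = y) (f : M →ₗ[Λᵐᵒᵖ] M') :
    Function.Injective (tmap Λ M M' S f) ↔
      ∀ x : M, f x ∈ NN Λ s₀ M' → x ∈ NN Λ s₀ M := by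
  constructor
  · intro hinj x hx
    rw [← tmk_s0_eq_zero_iff Λ hgen]
    apply hinj
    rw [tmap_tmk, map_zero, (tmk_s0_eq_zero_iff Λ hgen (f x))]
    exact hx
  · intro hcond
    rw [injective_iff_map_eq_zero]
    intro t ht
    obtain ⟨x, rfl⟩ := tmk_s0_surj Λ hgen t
    rw [tmap_tmk, tmk_s0_eq_zero_iff Λ hgen] at ht
    rw [tmk_s0_eq_zero_iff Λ hgen]
    exact hcond x ht

end PhiSec
section Homological

variable (Λ : Type) [Ring Λ] {S : Type} [AddCommGroup S] [Module Λ S] (s₀ : S)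

/-- Main snake-type transfer: if some projective presentation of `Z` is "good"
(tensoring with `S` keeps the kernel injective, expressed via `NN`), then any
short exact sequence ending in `Z` is good. -/
lemma good_transfer {Kt F Z A B : Type}
    [AddCommGroup Kt] [Module Λᵐᵒᵖ Kt] [AddCommGroup F] [Module Λᵐᵒᵖ F]
    [AddCommGroup Z] [Module Λᵐᵒᵖ Z] [AddCommGroup A] [Module Λᵐᵒᵖ A]
    [AddCommGroup B] [Module Λᵐᵒᵖ B]
    (ι : Kt →ₗ[Λᵐᵒᵖ] F) (π : F →ₗ[Λᵐᵒᵖ] Z) (hπ : Function.Surjective π)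
    (hFZ : Function.Exact ι π) (hF : Module.Projective Λᵐᵒᵖ F)
    (hgood : ∀ u, ι u ∈ NN Λ s₀ F → u ∈ NN Λ s₀ Kt)
    (f : A →ₗ[Λᵐᵒᵖ] B) (g : B →ₗ[Λᵐᵒᵖ] Z) (hf : Function.Injective f)
    (hg : Function.Surjective g) (hex : Function.Exact f g) :
    ∀ x : A, f x ∈ NN Λ s₀ B → x ∈ NN Λ s₀ A := by
  haveI := hF
  obtain ⟨ψ, hψ⟩ := Module.projective_lifting_property g π hg
  have hψ' : ∀ w, g (ψ w) = π w := fun w => by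
    rw [← LinearMap.comp_apply, hψ]
  -- every element of `NN B` decomposes
  have claim : ∀ v ∈ NN Λ s₀ B, ∃ a' ∈ NN Λ s₀ A, ∃ w ∈ NN Λ s₀ F, v = f a' + ψ w := by
    intro v hv
    induction hv using AddSubgroup.closure_induction with
    | mem z hz =>
      obtain ⟨r, hr, b, rfl⟩ := hz
      obtain ⟨w₀, hw₀⟩ := hπ (g b)
      have hb : g (b - ψ w₀) = 0 := by rw [map_sub, hψ' w₀, hw₀, sub_self]
      obtain ⟨a₀, ha₀⟩ := (hex _).mp hb
      refine ⟨op r • a₀, mem_NN_gen Λ s₀ hr _, op r • w₀, mem_NN_gen Λ s₀ hr _, ?_⟩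
      rw [map_smul, map_smul, ha₀, ← smul_add, sub_add_cancel]
    | zero => exact ⟨0, (NN Λ s₀ A).zero_mem, 0, (NN Λ s₀ F).zero_mem, by simp⟩
    | add v v' _ _ hv hv' =>
      obtain ⟨a, ha, w, hw, rfl⟩ := hv
      obtain ⟨a', ha', w', hw', rfl⟩ := hv'
      exact ⟨a + a', (NN Λ s₀ A).add_mem ha ha', w + w', (NN Λ s₀ F).add_mem hw hw',
        by rw [map_add, map_add]; abel⟩
    | neg v _ hv =>
      obtain ⟨a, ha, w, hw, rfl⟩ := hv
      exact ⟨-a, (NN Λ s₀ A).neg_mem ha, -w, (NN Λ s₀ F).neg_mem hw,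
        by rw [map_neg, map_neg]; abel⟩
  intro x hx
  obtain ⟨a', ha', w, hw, heq⟩ := claim (f x) hx
  have hπw : π w = 0 := by
    have h1 : g (f x) = 0 := (hex _).mpr ⟨x, rfl⟩
    have h2 : g (f a') = 0 := (hex _).mpr ⟨a', rfl⟩
    have : g (ψ w) = 0 := by
      have := congrArg g heq
      rw [h1, map_add, h2, zero_add] at this
      exact this.symm
    rw [← hψ' w]; exact this
  obtain ⟨u, hu⟩ := (hFZ _).mp hπw
  have hu' : u ∈ NN Λ s₀ Kt := hgood u (by rw [hu]; exact hw)
  -- build the linear map κ : Kt → A with f ∘ κ = ψ ∘ ι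
  have hrange : ∀ t : Kt, ψ (ι t) ∈ LinearMap.range f := by
    intro t
    have : g (ψ (ι t)) = 0 := by rw [hψ' (ι t)]; exact (hFZ _).mpr ⟨t, rfl⟩
    obtain ⟨a, ha⟩ := (hex _).mp this
    exact ⟨a, ha⟩
  let eA := LinearEquiv.ofInjective f hf
  let κ : Kt →ₗ[Λᵐᵒᵖ] A :=
    eA.symm.toLinearMap.comp (LinearMap.codRestrict (LinearMap.range f)
      (ψ.comp ι) hrange)
  have hκ : ∀ t, f (κ t) = ψ (ι t) := by
    intro t
    have h1 : ∀ a : A, (eA a : B) = f a := fun a => rfl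
    calc f (κ t) = (eA (κ t) : B) := (h1 _).symm
    _ = ψ (ι t) := by
        simp only [κ, LinearMap.comp_apply, LinearEquiv.coe_coe]
        rw [eA.apply_symm_apply]
        rfl
  have : f x = f (a' + κ u) := by
    rw [map_add, hκ u, hu, heq]
  rw [hf this]
  exact (NN Λ s₀ A).add_mem ha' (NN_map Λ s₀ κ hu')

/-- Goodness passes to finite powers. -/
lemma good_pow {Q1 Q0 T : Type}
    [AddCommGroup Q1] [Module Λᵐᵒᵖ Q1] [AddCommGroup Q0] [Module Λᵐᵒᵖ Q0]
    [AddCommGroup T] [Module Λᵐᵒᵖ T]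
    (i : Q1 →ₗ[Λᵐᵒᵖ] Q0) (p : Q0 →ₗ[Λᵐᵒᵖ] T)
    (hp : Function.Surjective p) (hex : Function.Exact i p)
    (hgood : ∀ x, i x ∈ NN Λ s₀ Q0 → x ∈ NN Λ s₀ Q1) (k : ℕ) :
    Function.Exact (LinearMap.pi (fun j : Fin k => i.comp (LinearMap.proj j)))
      (LinearMap.pi (fun j : Fin k => p.comp (LinearMap.proj j))) ∧
    Function.Surjective (LinearMap.pi (fun j : Fin k => p.comp (LinearMap.proj j))) ∧
    (∀ v : Fin k → Q1,
      (LinearMap.pi (fun j : Fin k => i.comp (LinearMap.proj j))) v ∈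
         NN Λ s₀ (Fin k → Q0) → v ∈ NN Λ s₀ (Fin k → Q1)) := by
  refine ⟨?_, ?_, ?_⟩
  · intro v
    constructor
    · intro hv
      have h : ∀ j, ∃ u, i u = v j := fun j => by
        have : p (v j) = 0 := congrFun hv j
        exact (hex _).mp this
      choose u hu using h
      exact ⟨u, funext fun j => by simpa using hu j⟩
    · rintro ⟨u, rfl⟩
      funext j
      exact (hex _).mpr ⟨u j, rfl⟩
  · intro v
    have h : ∀ j, ∃ x, p x = v j := fun j => hp (v j)
    choose u hu using h
    exact ⟨u, funext fun j => by simpa using hu j⟩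
  · intro v hv
    rw [NN_pi_iff] at hv ⊢
    intro j
    exact hgood (v j) (hv j)

/-- Goodness passes to direct summands (with the complement given via a linear
equivalence onto the presented module). -/
lemma good_summand {Q1 F Z C Y : Type}
    [AddCommGroup Q1] [Module Λᵐᵒᵖ Q1] [AddCommGroup F] [Module Λᵐᵒᵖ F]
    [AddCommGroup Z] [Module Λᵐᵒᵖ Z] [AddCommGroup C] [Module Λᵐᵒᵖ C]
    [AddCommGroup Y] [Module Λᵐᵒᵖ Y]
    (i : Q1 →ₗ[Λᵐᵒᵖ] F) (p : F →ₗ[Λᵐᵒᵖ] Z)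
    (hp : Function.Surjective p) (hex : Function.Exact i p)
    (hF : Module.Projective Λᵐᵒᵖ F)
    (hgood : ∀ x, i x ∈ NN Λ s₀ F → x ∈ NN Λ s₀ Q1)
    (e : (C × Y) ≃ₗ[Λᵐᵒᵖ] Z) :
    ∃ p' : F →ₗ[Λᵐᵒᵖ] C, Function.Surjective p' ∧
      Function.Exact (LinearMap.ker p').subtype p' ∧
      (∀ x : LinearMap.ker p', (x : F) ∈ NN Λ s₀ F → x ∈ NN Λ s₀ (LinearMap.ker p')) := by
  haveI := hF
  set p' : F →ₗ[Λᵐᵒᵖ] C :=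
    (LinearMap.fst Λᵐᵒᵖ C Y).comp (e.symm.toLinearMap.comp p) with hp'def
  have hp'z : ∀ z : F, p' z = (e.symm (p z)).1 := fun z => rfl
  obtain ⟨σ, hσ⟩ := Module.projective_lifting_property p
    (e.toLinearMap.comp ((LinearMap.inr Λᵐᵒᵖ C Y).comp
      ((LinearMap.snd Λᵐᵒᵖ C Y).comp (e.symm.toLinearMap.comp p)))) hp
  have hσ' : ∀ z : F, p (σ z) = e (0, (e.symm (p z)).2) := fun z => by
    have := congrFun (congrArg (fun q : F →ₗ[Λᵐᵒᵖ] Z => (q : F → Z)) hσ) z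
    simpa using this
  have hσker : ∀ z : F, σ z ∈ LinearMap.ker p' := by
    intro z
    rw [LinearMap.mem_ker, hp'z, hσ', e.symm_apply_apply]
  have hiker : ∀ u : Q1, i u ∈ LinearMap.ker p' := by
    intro u
    have h0 : p (i u) = 0 := (hex _).mpr ⟨u, rfl⟩
    rw [LinearMap.mem_ker, hp'z, h0, map_zero]
    rfl
  refine ⟨p', ?_, ?_, ?_⟩
  · intro c
    obtain ⟨z, hz⟩ := hp (e (c, 0))
    exact ⟨z, by rw [hp'z, hz, e.symm_apply_apply]⟩
  · intro z
    constructor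
    · intro hz
      exact ⟨⟨z, hz⟩, rfl⟩
    · rintro ⟨⟨w, hw⟩, rfl⟩
      exact hw
  · intro x hx
    have h1 : (e.symm (p (x : F))).1 = 0 := x.2
    have hker : p ((x : F) - σ (x : F)) = 0 := by
      rw [map_sub, hσ' (x : F)]
      have : p (x : F) = e (0, (e.symm (p (x : F))).2) := by
        conv_lhs => rw [← e.apply_symm_apply (p (x : F))]
        congr 1
        exact Prod.ext h1 rfl
      rw [← this, sub_self]
    obtain ⟨u, hu⟩ := (hex _).mp hker
    have hiu : i u ∈ NN Λ s₀ F := by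
      rw [hu]
      exact AddSubgroup.sub_mem _ hx (NN_map Λ s₀ σ hx)
    have hu1 : u ∈ NN Λ s₀ Q1 := hgood u hiu
    let j : Q1 →ₗ[Λᵐᵒᵖ] LinearMap.ker p' :=
      LinearMap.codRestrict (LinearMap.ker p') i hiker
    let σ' : F →ₗ[Λᵐᵒᵖ] LinearMap.ker p' :=
      LinearMap.codRestrict (LinearMap.ker p') σ hσker
    have hdecomp : x = j u + σ' (x : F) := by
      apply Subtype.ext
      show (x : F) = i u + σ (x : F)
      rw [hu, sub_add_cancel]
    rw [hdecomp]
    exact (NN Λ s₀ _).add_mem (NN_map Λ s₀ j hu1) (NN_map Λ s₀ σ' hx)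

/-- If `X ∈ add T` and `NN T = ⊤`, then `NN X = ⊤`. -/
lemma NN_top_of_InAdd {T X : Type}
    [AddCommGroup T] [Module Λᵐᵒᵖ T] [AddCommGroup X] [Module Λᵐᵒᵖ X]
    (h : InAdd Λᵐᵒᵖ T X) (hT : NN Λ s₀ T = ⊤) : NN Λ s₀ X = ⊤ := by
  obtain ⟨k, Y, ⟨e⟩⟩ := h
  have hpi : NN Λ s₀ (Fin k → T) = ⊤ := by
    rw [eq_top_iff]
    intro v _
    exact (NN_pi_iff Λ s₀ v).mpr fun j => hT ▸ AddSubgroup.mem_top (v j)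
  have hprod : NN Λ s₀ (X × Y) = ⊤ :=
    NN_top_of_surj Λ s₀ e.symm.toLinearMap e.symm.surjective hpi
  exact NN_top_of_surj Λ s₀ (LinearMap.fst Λᵐᵒᵖ X Y) (fun x => ⟨(x, 0), rfl⟩) hprod

end Homological
section DirectionA

variable (Λ : Type) [Ring Λ] {S : Type} [AddCommGroup S] [Module Λ S] (s₀ : S)

lemma NN_opreg {x : Λᵐᵒᵖ} (hx : x ∈ NN Λ s₀ Λᵐᵒᵖ) : (unop x) • s₀ = 0 := by
  induction hx using AddSubgroup.closure_induction with
  | mem z hz =>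
    obtain ⟨r, hr, u, rfl⟩ := hz
    have : unop (op r • u) = unop u * r := rfl
    rw [this, mul_smul, hr, smul_zero]
  | zero => simp
  | add a b _ _ ha hb =>
    show unop (a + b) • s₀ = 0
    rw [MulOpposite.unop_add, add_smul, ha, hb, add_zero]
  | neg a _ ha =>
    show unop (-a) • s₀ = 0
    rw [MulOpposite.unop_neg, neg_smul, ha, neg_zero]

lemma pi_projective {M : Type} [AddCommGroup M] [Module Λᵐᵒᵖ M]
    (hM : Module.Projective Λᵐᵒᵖ M) (k : ℕ) : Module.Projective Λᵐᵒᵖ (Fin k → M) := by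
  haveI := hM
  haveI h : Module.Projective Λᵐᵒᵖ (DirectSum (Fin k) (fun _ => M)) := by
    show Module.Projective Λᵐᵒᵖ (Π₀ _ : Fin k, M); infer_instance
  exact Module.Projective.of_equiv (DirectSum.linearEquivFunOnFintype Λᵐᵒᵖ (Fin k) (fun _ => M))

/-- Direction A: `T ⊗ S = 0` and `Tor₁(T,S) = 0` cannot both hold. -/
lemma not_both {T : Type} [AddCommGroup T] [Module Λᵐᵒᵖ T]
    (hT : IsTilting Λᵐᵒᵖ T) (hs₀ : s₀ ≠ 0)
    (hgen : ∀ y : S, ∃ r : Λ, r • s₀ = y)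
    (htop : NN Λ s₀ T = ⊤) (hTor : Tor1Vanishes Λ T S) : False := by
  obtain ⟨Q0, Q1, i, p, hQ0, hQ1, hi, hp, hex⟩ := hT.pd_le_one
  have good₀ : ∀ x : Q1, i x ∈ NN Λ s₀ Q0 → x ∈ NN Λ s₀ Q1 :=
    (injective_tmap_iff Λ hgen i).mp (hTor Q0 Q1 i p hQ0 hQ1 hi hp hex)
  obtain ⟨T0, T1, a, b, hT0add, hT1add, ha, hb, hab⟩ := hT.coresolution
  obtain ⟨k, Y, ⟨e⟩⟩ := hT1add
  obtain ⟨hexk, hpk, hgoodk⟩ := good_pow Λ s₀ i p hp hex good₀ k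
  have hFk : Module.Projective Λᵐᵒᵖ (Fin k → Q0) := pi_projective Λ hQ0 k
  obtain ⟨p', hp's, hex', hgood'⟩ := good_summand Λ s₀ _ _ hpk hexk hFk hgoodk e
  have hgoodT1 := good_transfer Λ s₀ (LinearMap.ker p').subtype p' hp's hex' hFk hgood'
    a b ha hb hab
  have hT0top : NN Λ s₀ T0 = ⊤ := NN_top_of_InAdd Λ s₀ hT0add htop
  have h1 : (1 : Λᵐᵒᵖ) ∈ NN Λ s₀ Λᵐᵒᵖ :=
    hgoodT1 1 (hT0top ▸ AddSubgroup.mem_top (a 1))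
  have := NN_opreg Λ s₀ h1
  rw [unop_one, one_smul] at this
  exact hs₀ this

end DirectionA
section DirectionB

variable (K Λ : Type) [Field K] [Ring Λ] [Algebra K Λ]

lemma ksmul_comm {A M : Type} [Ring A] [Algebra K A] [AddCommGroup M] [Module A M]
    [Module K M] [IsScalarTower K A M] (k : K) (a : A) (x : M) :
    k • (a • x) = a • (k • x) := by
  rw [← smul_assoc, Algebra.smul_def, Algebra.commutes k a, mul_smul, algebraMap_smul]

variable (S : Type) [AddCommGroup S] [Module Λ S] [Module K S] [IsScalarTower K Λ S]

/-- `Hom_K(S, K)` as a right `Λ`-module, i.e. a `Λᵐᵒᵖ`-module. -/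
def dualModule : Module Λᵐᵒᵖ (S →ₗ[K] K) where
  smul a f := f.comp
    ({ toFun := fun s => (unop a) • s
       map_add' := fun s s' => smul_add _ _ _
       map_smul' := fun k s => (ksmul_comm K k (unop a) s).symm } : S →ₗ[K] S)
  one_smul f := by ext s; show f ((1 : Λ) • s) = f s; rw [one_smul]
  mul_smul a b f := by
    ext s
    show f ((unop (a * b)) • s) = f (unop b • unop a • s)
    rw [MulOpposite.unop_mul, mul_smul]
  smul_zero a := by ext s; rfl
  smul_add a f g := by ext s; rfl
  add_smul a b f := by
    ext s
    show f ((unop (a + b)) • s) = f (unop a • s) + f (unop b • s)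
    rw [MulOpposite.unop_add, add_smul, map_add]
  zero_smul f := by
    ext s
    show f ((unop (0 : Λᵐᵒᵖ)) • s) = 0
    rw [MulOpposite.unop_zero, zero_smul, map_zero]

attribute [local instance] dualModule

lemma dual_smul_apply (r : Λ) (f : S →ₗ[K] K) (s : S) :
    (op r • f) s = f (r • s) := by with_unfolding_all rfl

variable {S}
variable (s₀ : S)

/-- Evaluation at `s₀` of a `Λᵐᵒᵖ`-linear map into the dual kills `NN`. -/
lemma dual_kills {M : Type} [AddCommGroup M] [Module Λᵐᵒᵖ M]
    (G : M →ₗ[Λᵐᵒᵖ] (S →ₗ[K] K)) {y : M} (hy : y ∈ NN Λ s₀ M) : G y s₀ = 0 := by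
  induction hy using AddSubgroup.closure_induction with
  | mem z hz =>
    obtain ⟨r, hr, u, rfl⟩ := hz
    rw [map_smul, dual_smul_apply, hr, map_zero]
  | zero => simp
  | add a b _ _ ha hb => rw [map_add, LinearMap.add_apply, ha, hb, add_zero]
  | neg a _ ha => rw [map_neg, LinearMap.neg_apply, ha, neg_zero]

/-- Building a `Λᵐᵒᵖ`-linear map into the dual of `S` from a `K`-functional
killing `NN`. -/
noncomputable def toDualHom {M : Type} [AddCommGroup M] [Module Λᵐᵒᵖ M] [Module K M]
    [IsScalarTower K Λᵐᵒᵖ M] (hgen : ∀ y : S, ∃ r : Λ, r • s₀ = y)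
    (lam : M →ₗ[K] K) (hkill : ∀ y ∈ NN Λ s₀ M, lam y = 0) :
    M →ₗ[Λᵐᵒᵖ] (S →ₗ[K] K) := by
  have lcongr : ∀ u v : M, u - v ∈ NN Λ s₀ M → lam u = lam v := by
    intro u v huv
    have := hkill _ huv
    rw [map_sub, sub_eq_zero] at this
    exact this
  have hρs : ∀ y : S, rho Λ hgen y • s₀ = y := fun y => rho_spec Λ hgen y
  exact
  { toFun := fun x' =>
    { toFun := fun s => lam (op (rho Λ hgen s) • x')
      map_add' := by
        intro s s'
        show lam (op (rho Λ hgen (s + s')) • x') =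
          lam (op (rho Λ hgen s) • x') + lam (op (rho Λ hgen s') • x')
        have key : op (rho Λ hgen (s + s')) • x' -
            (op (rho Λ hgen s) • x' + op (rho Λ hgen s') • x') =
            op (rho Λ hgen (s + s') - rho Λ hgen s - rho Λ hgen s') • x' := by
          rw [MulOpposite.op_sub, MulOpposite.op_sub, sub_smul, sub_smul]
          abel
        have hmem : op (rho Λ hgen (s + s') - rho Λ hgen s - rho Λ hgen s') • x' ∈
            NN Λ s₀ M := by
          refine mem_NN_gen Λ s₀ ?_ x'
          rw [sub_smul, sub_smul, hρs, hρs, hρs]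
          abel
        rw [lcongr _ _ (key ▸ hmem : _ ∈ NN Λ s₀ M), map_add]
      map_smul' := by
        intro k s
        show lam (op (rho Λ hgen (k • s)) • x') = k • lam (op (rho Λ hgen s) • x')
        have hmul : k • (op (rho Λ hgen s) • x') =
            op (algebraMap K Λ k * rho Λ hgen s) • x' := by
          rw [ksmul_comm K, ← algebraMap_smul Λᵐᵒᵖ k x', ← mul_smul,
            MulOpposite.algebraMap_apply, ← op_mul]
        have hmem : op (rho Λ hgen (k • s) - algebraMap K Λ k * rho Λ hgen s) • x' ∈
            NN Λ s₀ M := by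
          refine mem_NN_gen Λ s₀ ?_ x'
          rw [sub_smul, hρs, mul_smul, hρs, algebraMap_smul, sub_self]
        have key : op (rho Λ hgen (k • s)) • x' - k • (op (rho Λ hgen s) • x') =
            op (rho Λ hgen (k • s) - algebraMap K Λ k * rho Λ hgen s) • x' := by
          rw [hmul, MulOpposite.op_sub, sub_smul]
        rw [lcongr _ _ (key ▸ hmem : _ ∈ NN Λ s₀ M), map_smul] }
    map_add' := by
      intro x' y'
      refine LinearMap.ext fun s => ?_
      show lam (op (rho Λ hgen s) • (x' + y')) = _
      rw [smul_add, map_add]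
      rfl
    map_smul' := by
      intro a x'
      refine LinearMap.ext fun s => ?_
      show lam (op (rho Λ hgen s) • (a • x')) = lam (op (rho Λ hgen (unop a • s)) • x')
      have h1 : op (rho Λ hgen s) • (a • x') = op (unop a * rho Λ hgen s) • x' := by
        rw [← mul_smul, op_mul, op_unop]
      have hmem : op (unop a * rho Λ hgen s - rho Λ hgen (unop a • s)) • x' ∈
          NN Λ s₀ M := by
        refine mem_NN_gen Λ s₀ ?_ x'
        rw [sub_smul, mul_smul, hρs, hρs, sub_self]
      have key : op (rho Λ hgen s) • (a • x') - op (rho Λ hgen (unop a • s)) • x' =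
          op (unop a * rho Λ hgen s - rho Λ hgen (unop a • s)) • x' := by
        rw [h1, MulOpposite.op_sub, sub_smul]
      exact lcongr _ _ (key ▸ hmem : _ ∈ NN Λ s₀ M) }

lemma toDualHom_apply {M : Type} [AddCommGroup M] [Module Λᵐᵒᵖ M] [Module K M]
    [IsScalarTower K Λᵐᵒᵖ M] (hgen : ∀ y : S, ∃ r : Λ, r • s₀ = y)
    (lam : M →ₗ[K] K) (hkill : ∀ y ∈ NN Λ s₀ M, lam y = 0) (x : M) (s : S) :
    toDualHom K Λ s₀ hgen lam hkill x s = lam (op (rho Λ hgen s) • x) := rfl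

/-- If `x ∉ NN M` then some `Λᵐᵒᵖ`-linear map to the dual of `S` detects it. -/
lemma exists_hom_to_dual {M : Type} [AddCommGroup M] [Module Λᵐᵒᵖ M] [Module K M]
    [IsScalarTower K Λᵐᵒᵖ M] (hgen : ∀ y : S, ∃ r : Λ, r • s₀ = y)
    (x : M) (hx : x ∉ NN Λ s₀ M) :
    ∃ g : M →ₗ[Λᵐᵒᵖ] (S →ₗ[K] K), g x s₀ ≠ 0 := by
  classical
  have hsm : ∀ (k : K) (y : M), y ∈ NN Λ s₀ M → k • y ∈ NN Λ s₀ M := by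
    intro k y hy
    induction hy using AddSubgroup.closure_induction with
    | mem z hz =>
      obtain ⟨r, hr, u, rfl⟩ := hz
      rw [ksmul_comm K]
      exact mem_NN_gen Λ s₀ hr _
    | zero => simpa using (NN Λ s₀ M).zero_mem
    | add a b _ _ ha hb => rw [smul_add]; exact (NN Λ s₀ M).add_mem ha hb
    | neg a _ ha => rw [smul_neg]; exact (NN Λ s₀ M).neg_mem ha
  let NNK : Submodule K M :=
    { carrier := NN Λ s₀ M
      add_mem' := fun ha hb => (NN Λ s₀ M).add_mem ha hb
      zero_mem' := (NN Λ s₀ M).zero_mem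
      smul_mem' := fun k y hy => hsm k y hy }
  have hxq : NNK.mkQ x ≠ 0 := by
    intro h
    exact hx ((Submodule.Quotient.mk_eq_zero NNK).mp h)
  obtain ⟨lam0, hlam0⟩ : ∃ lam0 : (M ⧸ NNK) →ₗ[K] K, lam0 (NNK.mkQ x) ≠ 0 := by
    set b := Module.Basis.ofVectorSpace K (M ⧸ NNK)
    have hb : b.repr (NNK.mkQ x) ≠ 0 := fun h => hxq (by
      have := congrArg b.repr.symm h
      simpa using this)
    obtain ⟨j, hj⟩ : ∃ j, b.repr (NNK.mkQ x) j ≠ 0 := by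
      by_contra hcon
      push_neg at hcon
      exact hb (Finsupp.ext fun j => hcon j)
    exact ⟨b.coord j, hj⟩
  set lam : M →ₗ[K] K := lam0.comp NNK.mkQ with hlam
  have hkill : ∀ y ∈ NN Λ s₀ M, lam y = 0 := by
    intro y hy
    have h0 : NNK.mkQ y = 0 := (Submodule.Quotient.mk_eq_zero NNK).mpr hy
    simp [hlam, LinearMap.comp_apply, h0]
  refine ⟨toDualHom K Λ s₀ hgen lam hkill, ?_⟩
  rw [toDualHom_apply]
  have key : op (rho Λ hgen s₀) • x - x = op (rho Λ hgen s₀ - 1) • x := by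
    rw [MulOpposite.op_sub, sub_smul, op_one, one_smul]
  have hmem : op (rho Λ hgen s₀ - 1) • x ∈ NN Λ s₀ M := by
    refine mem_NN_gen Λ s₀ ?_ x
    rw [sub_smul, rho_spec Λ hgen, one_smul, sub_self]
  have : lam (op (rho Λ hgen s₀) • x) = lam x := by
    have := hkill _ (key ▸ hmem : _ ∈ NN Λ s₀ M)
    rw [map_sub, sub_eq_zero] at this
    exact this
  rw [this]
  exact hlam0

/-- The dual of a simple module is simple. -/
lemma dual_simple [FiniteDimensional K S] (hsimple : IsSimpleModule Λ S)
    (W : Submodule Λᵐᵒᵖ (S →ₗ[K] K)) (hW : W ≠ ⊥) : W = ⊤ := by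
  obtain ⟨f, hfW, hf0⟩ := W.exists_mem_ne_zero_of_ne_bot hW
  -- the joint kernel of `W` is a `Λ`-submodule of `S`
  let Wperp : Submodule Λ S :=
    { carrier := {s | ∀ g ∈ W, g s = 0}
      add_mem' := fun {s} {t} hs ht g hg => by rw [map_add, hs g hg, ht g hg, add_zero]
      zero_mem' := fun g _ => map_zero g
      smul_mem' := by
        intro r s hs g hg
        have : (op r • g) s = 0 := hs _ (W.smul_mem (op r) hg)
        rw [dual_smul_apply] at this
        exact this }
  have hWperp : Wperp = ⊥ := by
    rcases hsimple.1.2 Wperp with h | h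
    · exact h
    · exfalso
      obtain ⟨s, hs⟩ : ∃ s, f s ≠ 0 := by
        by_contra hcon
        push_neg at hcon
        exact hf0 (LinearMap.ext fun s => hcon s)
      exact hs ((h ▸ Submodule.mem_top : s ∈ Wperp) f hfW)
  -- `W` as a `K`-subspace of the dual
  let WK : Submodule K (Module.Dual K S) :=
    { carrier := W
      add_mem' := fun ha hb => W.add_mem ha hb
      zero_mem' := W.zero_mem
      smul_mem' := by
        intro k g hg
        have : k • g = op (algebraMap K Λ k) • g := by
          refine LinearMap.ext fun s => ?_
          rw [dual_smul_apply, algebraMap_smul, map_smul]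
          rfl
        rw [this]
        exact W.smul_mem _ hg }
  have hco : WK.dualCoannihilator = ⊥ := by
    rw [eq_bot_iff]
    intro s hs
    rw [Submodule.mem_dualCoannihilator] at hs
    have : s ∈ Wperp := fun g hg => hs g hg
    rw [hWperp] at this
    exact this
  have hsurj : Function.Surjective (Module.Dual.eval K S) := by
    have := (Module.evalEquiv K S).surjective
    intro y
    obtain ⟨x, hx⟩ := this y
    exact ⟨x, by rw [← hx]; rfl⟩
  have hann : WK.dualAnnihilator = ⊥ := by
    have h1 : WK.dualAnnihilator.comap (Module.Dual.eval K S) = ⊥ := hco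
    have := congrArg (Submodule.map (Module.Dual.eval K S)) h1
    rwa [Submodule.map_comap_eq_of_surjective hsurj, Submodule.map_bot] at this
  have hWK : WK = ⊤ := by
    have h2 : (⊤ : Subspace K (Module.Dual K S)).dualAnnihilator = ⊥ :=
      Submodule.dualAnnihilator_top
    exact Subspace.dualAnnihilator_inj.mp (hann.trans h2.symm)
  ext g
  constructor
  · intro _; exact Submodule.mem_top
  · intro _
    exact (hWK ▸ Submodule.mem_top : g ∈ WK)
/-- Direction B: if `T ⊗ S ≠ 0` then `Tor₁(T,S) = 0`. -/
lemma good_of_not_top [FiniteDimensional K S] (hsimple : IsSimpleModule Λ S)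
    {T : Type} [AddCommGroup T] [Module Λᵐᵒᵖ T] [Module K T] [IsScalarTower K Λᵐᵒᵖ T]
    (hT : IsTilting Λᵐᵒᵖ T) (hgen : ∀ y : S, ∃ r : Λ, r • s₀ = y)
    (hnt : NN Λ s₀ T ≠ ⊤)
    (Q0 Q1 : ModuleCat.{0} Λᵐᵒᵖ) (i : Q1 →ₗ[Λᵐᵒᵖ] Q0) (p : Q0 →ₗ[Λᵐᵒᵖ] T)
    (h0 : Module.Projective Λᵐᵒᵖ Q0) (h1 : Module.Projective Λᵐᵒᵖ Q1)
    (hi : Function.Injective i) (hp : Function.Surjective p) (hex : Function.Exact i p) :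
    ∀ x : Q1, i x ∈ NN Λ s₀ Q0 → x ∈ NN Λ s₀ Q1 := by
  obtain ⟨x₀, hx₀⟩ : ∃ x₀ : T, x₀ ∉ NN Λ s₀ T := by
    by_contra h
    push_neg at h
    exact hnt (eq_top_iff.mpr fun y _ => h y)
  obtain ⟨φ, hφ⟩ := exists_hom_to_dual K Λ s₀ hgen x₀ hx₀
  have hφ0 : φ x₀ ≠ 0 := fun h => hφ (by rw [h]; rfl)
  have hrange : LinearMap.range φ ≠ ⊥ := by
    intro h
    have hmem : φ x₀ ∈ LinearMap.range φ := ⟨x₀, rfl⟩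
    rw [h] at hmem
    exact hφ0 ((Submodule.mem_bot _).mp hmem)
  have hφsurj : Function.Surjective φ := by
    rw [← LinearMap.range_eq_top]
    exact dual_simple K Λ hsimple (LinearMap.range φ) hrange
  intro x hx
  by_contra hxn
  letI : Module K Q1 := Module.compHom Q1 (algebraMap K Λᵐᵒᵖ)
  haveI : IsScalarTower K Λᵐᵒᵖ Q1 :=
    ⟨fun k a y => by rw [Algebra.smul_def, mul_smul]; rfl⟩
  obtain ⟨g, hg⟩ := exists_hom_to_dual K Λ s₀ hgen x hxn
  haveI := h1
  obtain ⟨g', hg'⟩ := Module.projective_lifting_property φ g hφsurj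
  obtain ⟨ψ, hψ⟩ := hT.ext_self_vanish Q0 Q1 i p h0 h1 hi hp hex g'
  have hzero : g x s₀ = 0 := by
    have e1 : g x = φ (ψ (i x)) := by
      rw [← hg']
      show φ (g' x) = φ (ψ (i x))
      rw [← hψ]
      rfl
    have e2 : (φ.comp ψ) (i x) s₀ = 0 := dual_kills K Λ s₀ (φ.comp ψ) hx
    rw [e1]
    exact e2
  exact hg hzero

end DirectionB

theorem stmt3 (K Λ : Type) [Field K] [Ring Λ] [Algebra K Λ] [FiniteDimensional K Λ]
    (T : Type) [AddCommGroup T] [Module Λᵐᵒᵖ T] (hT : IsTilting Λᵐᵒᵖ T)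
    (S : Type) [AddCommGroup S] [Module Λ S] (hS : IsSimpleModule Λ S) :
    Xor' (Subsingleton (BalTensor Λ T S)) (Tor1Vanishes Λ T S) := by
  haveI hnt : Nontrivial S := IsSimpleModule.nontrivial Λ S
  obtain ⟨s₀, hs₀⟩ := exists_ne (0 : S)
  have hspan : Submodule.span Λ {s₀} = ⊤ := by
    rcases hS.1.2 (Submodule.span Λ {s₀}) with h | h
    · exfalso
      apply hs₀
      have : s₀ ∈ Submodule.span Λ {s₀} := Submodule.mem_span_singleton_self s₀
      rw [h] at this
      exact (Submodule.mem_bot Λ).mp this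
    · exact h
  have hgen : ∀ y : S, ∃ r : Λ, r • s₀ = y := fun y =>
    Submodule.mem_span_singleton.mp (hspan ▸ Submodule.mem_top)
  letI : Module K S := Module.compHom S (algebraMap K Λ)
  haveI : IsScalarTower K Λ S := ⟨fun k r y => by rw [Algebra.smul_def, mul_smul]; rfl⟩
  letI : Module K T := Module.compHom T (algebraMap K Λᵐᵒᵖ)
  haveI : IsScalarTower K Λᵐᵒᵖ T := ⟨fun k a y => by rw [Algebra.smul_def, mul_smul]; rfl⟩
  haveI : Module.Finite Λ S := ⟨⟨{s₀}, by simpa using hspan⟩⟩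
  haveI : Module.Finite K Λ := ‹FiniteDimensional K Λ›
  haveI : FiniteDimensional K S := Module.Finite.trans Λ S
  by_cases hsub : Subsingleton (BalTensor Λ T S)
  · exact Or.inl ⟨hsub, fun hTor =>
      not_both Λ s₀ hT hs₀ hgen ((subsingleton_iff_NN_top Λ hgen).mp hsub) hTor⟩
  · refine Or.inr ⟨?_, hsub⟩
    intro Q0 Q1 i p h0 h1 hi hp hex
    rw [injective_tmap_iff Λ hgen]
    exact good_of_not_top K Λ s₀ hS hT hgen
      (fun htop => hsub ((subsingleton_iff_NN_top Λ hgen).mpr htop))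
      Q0 Q1 i p h0 h1 hi hp hex
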